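/- Let p be a prime, n a positive integer, k an integer with 0 ≤ k ≤ n−1, and j an element of Z_{p^n}. The polynomial (x+j)^k·(1 − (x+j)^{φ(p^n)}) in Z_{p^n}[x], where φ(p^n) = p^n − p^{n−1}, represents the cyclic shift u_k^{<j>}; that is, for every x in Z_{p^n}, its evaluation at x equals u_k(x + j), where u_k(y) = y^k if p divides y and u_k(y) = 0 otherwise. -/

import Mathlib

open scoped Classical in
theorem poly_for_uk_shift (p n k : ℕ) (hp : p.Prime) (hn : 0 < n) (hk : k ≤ n - 1)
    (j : ZMod (p ^ n)) :
    ∀ x : ZMod (p ^ n),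
      ((Polynomial.X + Polynomial.C j) ^ k *
          (1 - (Polynomial.X + Polynomial.C j) ^ (p ^ n - p ^ (n - 1))) :
          Polynomial (ZMod (p ^ n))).eval x =
        if x + j ∈ Ideal.span {(p : ZMod (p ^ n))} then (x + j) ^ k else 0 := by
  intro x
  have hpn : 1 < p ^ n := Nat.one_lt_pow hn.ne' hp.one_lt
  haveI : NeZero (p ^ n) := ⟨by omega⟩
  have htot : p ^ n - p ^ (n - 1) = Nat.totient (p ^ n) := by
    rw [Nat.totient_prime_pow hp hn]
    cases n with
    | zero => omega
    | succ m =>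
      simp only [Nat.add_sub_cancel, pow_succ, Nat.mul_sub_one]
  set y := x + j with hy
  simp only [Polynomial.eval_mul, Polynomial.eval_sub, Polynomial.eval_one,
    Polynomial.eval_pow, Polynomial.eval_add, Polynomial.eval_X, Polynomial.eval_C]
  by_cases h : y ∈ Ideal.span {(p : ZMod (p ^ n))}
  · rw [if_pos h]
    obtain ⟨c, hc⟩ := Ideal.mem_span_singleton.mp h
    have hnle : n ≤ p ^ n - p ^ (n - 1) := by
      rw [htot, Nat.totient_prime_pow hp hn]
      have h2 : n ≤ 2 ^ (n - 1) := by
        obtain ⟨m, rfl⟩ : ∃ m, n = m + 1 := ⟨n - 1, by omega⟩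
        simpa using (Nat.lt_two_pow_self (n := m))
      calc n ≤ 2 ^ (n - 1) := h2
        _ ≤ p ^ (n - 1) * 1 := by
          simpa using Nat.pow_le_pow_left hp.two_le (n - 1)
        _ ≤ p ^ (n - 1) * (p - 1) := Nat.mul_le_mul_left _ (by have := hp.two_le; omega)
    have hyphi : y ^ (p ^ n - p ^ (n - 1)) = 0 := by
      have hyn : y ^ n = 0 := by
        rw [hc, mul_pow]
        have hp0 : (p : ZMod (p ^ n)) ^ n = 0 := by
          rw [← Nat.cast_pow, ZMod.natCast_self]
        rw [hp0, zero_mul]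
      calc y ^ (p ^ n - p ^ (n - 1)) = y ^ n * y ^ (p ^ n - p ^ (n - 1) - n) := by
            rw [← pow_add]; congr 1; omega
        _ = 0 := by rw [hyn, zero_mul]
    rw [hyphi]
    ring
  · rw [if_neg h]
    have hu : IsUnit y := by
      by_contra hu
      apply h
      rw [Ideal.mem_span_singleton]
      have hyv : ¬ Nat.Coprime y.val (p ^ n) := by
        intro hco
        apply hu
        have := (ZMod.isUnit_iff_coprime y.val (p ^ n)).mpr hco
        rwa [ZMod.natCast_val, ZMod.cast_id] at this
      have hpd : p ∣ y.val := by
        by_contra hpd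
        exact hyv (Nat.Coprime.pow_right _ ((Nat.coprime_comm.mp (hp.coprime_iff_not_dvd.mpr hpd))))
      obtain ⟨m, hm⟩ := hpd
      refine ⟨(m : ZMod (p ^ n)), ?_⟩
      have : ((y.val : ℕ) : ZMod (p ^ n)) = y := by
        rw [ZMod.natCast_val, ZMod.cast_id]
      rw [← this, hm]
      push_cast
      ring
    obtain ⟨u, hu'⟩ := hu
    have h1 : y ^ (p ^ n - p ^ (n - 1)) = 1 := by
      rw [htot, ← hu']
      have := ZMod.pow_totient u
      calc (u : ZMod (p ^ n)) ^ Nat.totient (p ^ n) = ((u ^ Nat.totient (p ^ n) : (ZMod (p ^ n))ˣ) : ZMod (p ^ n)) := by push_cast; ring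
        _ = 1 := by rw [this]; rfl
    rw [h1]
    ring
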